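/- Let N be a squarefree positive integer with N ≡ 3 (mod 4), and let p be an odd prime not dividing N such that the Legendre symbol (-N/p) = -1. Then the following are equivalent: (i) (-p/q) = 1 for every prime q dividing N; (ii) (q/p) = 1 for every prime q ≡ 1 (mod 4) dividing N, and (-q₁/p) = (-q₂/p) for all primes q₁, q₂ ≡ 3 (mod 4) dividing N. -/

import Mathlib

open Finset

private lemma leg_prod_aux (p : ℕ) [Fact p.Prime] (S : Finset ℕ) :
    legendreSym p (∏ q ∈ S, (q : ℤ)) = ∏ q ∈ S, legendreSym p (q : ℤ) := by
  classical
  induction S using Finset.induction_on with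
  | empty => simp [legendreSym]
  | insert _ _ h ih => rw [Finset.prod_insert h, Finset.prod_insert h, legendreSym.mul, ih]

/-- For `q ≡ 1 (mod 4)` prime and odd prime `p`, `(-p/q) = (q/p)`. -/
private lemma legA (p q : ℕ) [Fact p.Prime] [Fact q.Prime] (hp2 : p % 2 = 1)
    (hq1 : q % 4 = 1) : legendreSym q (-(p : ℤ)) = legendreSym p (q : ℤ) := by
  have hq2 : q ≠ 2 := by omega
  have hp2' : p ≠ 2 := by omega
  rw [show (-(p : ℤ)) = (-1) * p by ring, legendreSym.mul,
    legendreSym.at_neg_one hq2, ZMod.χ₄_nat_one_mod_four hq1, one_mul]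
  exact (legendreSym.quadratic_reciprocity_one_mod_four hq1 hp2').symm

/-- For `q ≡ 3 (mod 4)` prime and odd prime `p`, `(-p/q) = -(-q/p)`. -/
private lemma legB (p q : ℕ) [Fact p.Prime] [Fact q.Prime] (hp2 : p % 2 = 1)
    (hq3 : q % 4 = 3) : legendreSym q (-(p : ℤ)) = - legendreSym p (-(q : ℤ)) := by
  have hq2 : q ≠ 2 := by omega
  have hp2' : p ≠ 2 := by omega
  have h1 : legendreSym q (-(p : ℤ)) = ZMod.χ₄ q * legendreSym q (p : ℤ) := by
    rw [show (-(p : ℤ)) = (-1) * p by ring, legendreSym.mul, legendreSym.at_neg_one hq2]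
  have h2 : legendreSym p (-(q : ℤ)) = ZMod.χ₄ p * legendreSym p (q : ℤ) := by
    rw [show (-(q : ℤ)) = (-1) * q by ring, legendreSym.mul, legendreSym.at_neg_one hp2']
  rw [h1, h2, ZMod.χ₄_nat_three_mod_four hq3]
  have hp4 : p % 4 = 1 ∨ p % 4 = 3 := by omega
  rcases hp4 with hp4 | hp4
  · rw [ZMod.χ₄_nat_one_mod_four hp4,
      legendreSym.quadratic_reciprocity_one_mod_four hp4 hq2]
    ring
  · rw [ZMod.χ₄_nat_three_mod_four hp4,
      legendreSym.quadratic_reciprocity_three_mod_four hp4 hq3]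
    ring

private lemma odd_card_three_mod_four (N : ℕ) (hN : Squarefree N) (h4 : N % 4 = 3) :
    Odd ((N.primeFactors.filter (fun q => q % 4 = 3)).card) := by
  classical
  have h2 : ¬ (2 ∣ N) := by omega
  have hodd : ∀ q ∈ N.primeFactors, q % 4 = 1 ∨ q % 4 = 3 := by
    intro q hq
    have hqp := Nat.prime_of_mem_primeFactors hq
    have hqd := Nat.dvd_of_mem_primeFactors hq
    have hq2 : q ≠ 2 := fun h => h2 (h ▸ hqd)
    have := hqp.two_le
    have hqo : q % 2 = 1 := hqp.eq_two_or_odd.resolve_left hq2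
    omega
  have hprod := Nat.prod_primeFactors_of_squarefree hN
  have hcast : ((N : ℕ) : ZMod 4) = 3 := by
    rw [← ZMod.natCast_mod N 4, h4]; rfl
  rw [← hprod, Nat.cast_prod,
    ← Finset.prod_filter_mul_prod_filter_not N.primeFactors (fun q => q % 4 = 3)] at hcast
  have e1 : ∏ q ∈ N.primeFactors.filter (fun q => ¬ q % 4 = 3), ((q : ℕ) : ZMod 4) = 1 := by
    apply Finset.prod_eq_one
    intro q hq
    rw [Finset.mem_filter] at hq
    have h1 : q % 4 = 1 := (hodd q hq.1).resolve_right hq.2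
    rw [← ZMod.natCast_mod q 4, h1]; rfl
  have e3 : ∏ q ∈ N.primeFactors.filter (fun q => q % 4 = 3), ((q : ℕ) : ZMod 4)
      = 3 ^ (N.primeFactors.filter (fun q => q % 4 = 3)).card := by
    rw [Finset.prod_congr rfl (fun q hq => ?_), Finset.prod_const]
    rw [Finset.mem_filter] at hq
    rw [← ZMod.natCast_mod q 4, hq.2]; rfl
  rw [e1, e3, mul_one] at hcast
  by_contra hcon
  rw [Nat.not_odd_iff_even] at hcon
  obtain ⟨m, hm⟩ := hcon
  rw [hm, show m + m = 2 * m by ring, pow_mul,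
    show ((3 : ZMod 4) ^ 2) = 1 from by decide, one_pow] at hcast
  exact (by decide : ((1 : ZMod 4)) ≠ 3) hcast

/-- Let `N` be a squarefree positive integer with `N ≡ 3 (mod 4)`, and let `p` be an odd prime
not dividing `N` such that the Legendre symbol `(-N/p) = -1`. Then the following are
equivalent: (i) `(-p/q) = 1` for every prime `q` dividing `N`; (ii) `(q/p) = 1` for every
prime `q ≡ 1 (mod 4)` dividing `N`, and `(-q₁/p) = (-q₂/p)` for all primes
`q₁, q₂ ≡ 3 (mod 4)` dividing `N`. -/
theorem neg_p_residue_iff_genus_conditions (N p : ℕ) [Fact p.Prime] (hp2 : p % 2 = 1)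
    (hN : Squarefree N) (hNpos : 0 < N) (hN4 : N % 4 = 3) (hpN : ¬ p ∣ N)
    (hleg : legendreSym p (-(N : ℤ)) = -1) :
    (∀ q : ℕ, ∀ hq : q.Prime, q ∣ N →
        @legendreSym q ⟨hq⟩ (-(p : ℤ)) = 1) ↔
      ((∀ q : ℕ, q.Prime → q ∣ N → q % 4 = 1 → legendreSym p (q : ℤ) = 1) ∧
        (∀ q₁ q₂ : ℕ, q₁.Prime → q₂.Prime → q₁ ∣ N → q₂ ∣ N →
          q₁ % 4 = 3 → q₂ % 4 = 3 →
          legendreSym p (-(q₁ : ℤ)) = legendreSym p (-(q₂ : ℤ)))) := by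
  classical
  constructor
  · intro h
    constructor
    · intro q hq hqN hq1
      haveI : Fact q.Prime := ⟨hq⟩
      rw [← legA p q hp2 hq1]
      exact h q hq hqN
    · intro q₁ q₂ h₁ h₂ hd₁ hd₂ hm₁ hm₂
      haveI : Fact q₁.Prime := ⟨h₁⟩
      haveI : Fact q₂.Prime := ⟨h₂⟩
      have e₁ := legB p q₁ hp2 hm₁
      have e₂ := legB p q₂ hp2 hm₂
      rw [h q₁ h₁ hd₁] at e₁
      rw [h q₂ h₂ hd₂] at e₂
      linarith
  · rintro ⟨h1, h3⟩
    -- first obtain a prime q₀ ≡ 3 mod 4 dividing N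
    have hkodd := odd_card_three_mod_four N hN hN4
    have hne : (N.primeFactors.filter (fun q => q % 4 = 3)).Nonempty := by
      rw [← Finset.card_pos]
      rcases hkodd with ⟨m, hm⟩
      omega
    obtain ⟨q₀, hq₀⟩ := hne
    rw [Finset.mem_filter] at hq₀
    have hq₀p : q₀.Prime := Nat.prime_of_mem_primeFactors hq₀.1
    have hq₀d : q₀ ∣ N := Nat.dvd_of_mem_primeFactors hq₀.1
    have hq₀3 : q₀ % 4 = 3 := hq₀.2
    set ε : ℤ := legendreSym p (-(q₀ : ℤ)) with hεdef
    set χ : ℤ := legendreSym p (-1 : ℤ) with hχdef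
    have hp2' : p ≠ 2 := by omega
    have hpP : p.Prime := Fact.out
    -- nonvanishing facts
    have hqne0 : ∀ q : ℕ, q.Prime → q ∣ N → ((q : ℤ) : ZMod p) ≠ 0 := by
      intro q hq hqd h0
      have : (p : ℤ) ∣ (q : ℤ) := by
        rwa [ZMod.intCast_zmod_eq_zero_iff_dvd] at h0
      have hdvd : p ∣ q := by exact_mod_cast this
      have : p = q := ((Nat.prime_dvd_prime_iff_eq hpP hq).mp hdvd)
      exact hpN (this ▸ hqd)
    have hχ : χ = 1 ∨ χ = -1 := by
      apply legendreSym.eq_one_or_neg_one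
      simp only [Int.cast_neg, Int.cast_one]
      exact fun h => one_ne_zero (neg_eq_zero.mp h)
    have hε' : ε = χ * legendreSym p (q₀ : ℤ) := by
      rw [hεdef, hχdef, show (-(q₀ : ℤ)) = (-1) * q₀ by ring, legendreSym.mul]
    have hεpm : ε = 1 ∨ ε = -1 := by
      apply legendreSym.eq_one_or_neg_one
      simp only [Int.cast_neg, Int.cast_natCast]
      exact fun h => hqne0 q₀ hq₀p hq₀d (by simpa using neg_eq_zero.mp h)
    -- product formula
    have hprodN : legendreSym p (-(N : ℤ)) = χ * ∏ q ∈ N.primeFactors, legendreSym p (q : ℤ) := by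
      rw [show (-(N : ℤ)) = (-1) * N by ring, legendreSym.mul, ← hχdef]
      congr 1
      rw [← Nat.prod_primeFactors_of_squarefree hN, Nat.cast_prod, leg_prod_aux]
      rw [Nat.prod_primeFactors_of_squarefree hN]
    have hsplit := Finset.prod_filter_mul_prod_filter_not N.primeFactors
      (fun q => q % 4 = 3) (fun q => legendreSym p (q : ℤ))
    have h2N : ¬ (2 ∣ N) := by omega
    have hmod : ∀ q ∈ N.primeFactors, q % 4 = 1 ∨ q % 4 = 3 := by
      intro q hq
      have hqp := Nat.prime_of_mem_primeFactors hq
      have hqd := Nat.dvd_of_mem_primeFactors hq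
      have hq2 : q ≠ 2 := fun h => h2N (h ▸ hqd)
      have := hqp.two_le
      have hqo : q % 2 = 1 := hqp.eq_two_or_odd.resolve_left hq2
      omega
    have e1 : ∏ q ∈ N.primeFactors.filter (fun q => ¬ q % 4 = 3), legendreSym p (q : ℤ) = 1 := by
      apply Finset.prod_eq_one
      intro q hq
      rw [Finset.mem_filter] at hq
      exact h1 q (Nat.prime_of_mem_primeFactors hq.1) (Nat.dvd_of_mem_primeFactors hq.1)
        ((hmod q hq.1).resolve_right hq.2)
    have e3 : ∏ q ∈ N.primeFactors.filter (fun q => q % 4 = 3), legendreSym p (q : ℤ)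
        = (χ * ε) ^ (N.primeFactors.filter (fun q => q % 4 = 3)).card := by
      rw [Finset.prod_congr rfl (fun q hq => ?_), Finset.prod_const]
      rw [Finset.mem_filter] at hq
      have hqp := Nat.prime_of_mem_primeFactors hq.1
      have hqd := Nat.dvd_of_mem_primeFactors hq.1
      have hεq : legendreSym p (-(q : ℤ)) = ε :=
        h3 q q₀ hqp hq₀p hqd hq₀d hq.2 hq₀3
      have : χ * legendreSym p (q : ℤ) = ε := by
        rw [← hεq, hχdef, show (-(q : ℤ)) = (-1) * q by ring, legendreSym.mul]
      rcases hχ with hχ1 | hχ1 <;> rw [hχ1] at this ⊢ <;> linarith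
    -- conclude ε = -1
    have hεneg : ε = -1 := by
      rcases hεpm with hε1 | hε1
      · exfalso
        rw [hprodN, ← hsplit, e1, e3, mul_one, hε1, mul_one] at hleg
        rcases hkodd with ⟨m, hm⟩
        rcases hχ with hχ1 | hχ1 <;>
          rw [hχ1, hm] at hleg <;>
          simp [pow_succ, pow_mul] at hleg
      · exact hε1
    -- now prove (i)
    intro q hq hqN
    haveI : Fact q.Prime := ⟨hq⟩
    have hq2 : q ≠ 2 := fun h => h2N (h ▸ hqN)
    have hqmem : q ∈ N.primeFactors :=
      Nat.mem_primeFactors.mpr ⟨hq, hqN, by omega⟩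
    rcases hmod q hqmem with hq1 | hq3
    · rw [legA p q hp2 hq1]
      exact h1 q hq hqN hq1
    · rw [legB p q hp2 hq3, h3 q q₀ hq hq₀p hqN hq₀d hq3 hq₀3, ← hεdef, hεneg]
      norm_num
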